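/- Let R and S be orthogonal projections on a real Hilbert space H with ker(R) ∩ ker(S) = {0}, r ∈ ran(R), s ∈ ran(S), and τ ∈ (0,1). With f₀ = argmin{‖Sf − s‖ : Rf = r} and f₁ = argmin{‖Rf − r‖ : Sf = s}, the minimizer f_τ of f ↦ (1−τ)‖Rf − r‖² + τ‖Sf − s‖² equals the convex combination (1−τ) f₀ + τ f₁. -/

import Mathlib

open scoped RealInnerProductSpace

section Aux
variable {H : Type*} [NormedAddCommGroup H] [InnerProductSpace ℝ H]

lemma quad_aux (a b : ℝ) (hb : 0 ≤ b) (h : ∀ t : ℝ, 0 ≤ 2*t*a + t^2*b) : a = 0 := by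
  by_contra ha
  have hb1 : (0:ℝ) < b + 1 := by linarith
  have h1 := h (-a/(b+1))
  have heq : 2*(-a/(b+1))*a + (-a/(b+1))^2*b = a^2 * (-(b+2))/(b+1)^2 := by
    field_simp; ring
  rw [heq] at h1
  have ha2 : 0 < a^2 := by positivity
  have h2 : 0 < (b+1)^2 := by positivity
  have h1' : 0 ≤ a^2 * -(b+2) := by
    by_contra hc
    push_neg at hc
    have : a^2 * -(b+2) / (b+1)^2 < 0 := div_neg_of_neg_of_pos hc h2
    linarith
  have h3 : 0 < a^2 * (b+2) := mul_pos ha2 (by linarith)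
  linarith

lemma fix_of_ker_orth (P : H →L[ℝ] H)
    (hsym : ∀ x y : H, ⟪P x, y⟫ = ⟪x, P y⟫)
    (hidem : ∀ x, P (P x) = P x)
    (v : H) (hv : ∀ k, P k = 0 → ⟪v, k⟫ = 0) : P v = v := by
  have hk : P (v - P v) = 0 := by simp [map_sub, hidem]
  have h1 : ⟪v, v - P v⟫ = 0 := hv _ hk
  have h2 : ⟪P v, v - P v⟫ = 0 := by
    rw [hsym, hk, inner_zero_right]
  have h3 : ⟪v - P v, v - P v⟫ = 0 := by
    rw [inner_sub_left, h1, h2, sub_zero]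
  have := inner_self_eq_zero.mp h3
  rw [sub_eq_zero] at this
  exact this.symm

lemma variational (P Q : H →L[ℝ] H) (p q : H) (f₀ : H)
    (hmin : IsMinOn (fun f : H => ‖P f - p‖) {f : H | Q f = q} f₀)
    (hQ : Q f₀ = q) (k : H) (hk : Q k = 0) : ⟪P f₀ - p, P k⟫ = 0 := by
  apply quad_aux _ (‖P k‖^2) (by positivity)
  intro t
  have hmem : f₀ + t • k ∈ {f : H | Q f = q} := by
    simp [Set.mem_setOf_eq, map_add, map_smul, hQ, hk]
  have := hmin hmem
  simp only [Set.mem_setOf_eq] at this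
  have hle : ‖P f₀ - p‖ ≤ ‖P (f₀ + t • k) - p‖ := this
  have hexp : P (f₀ + t • k) - p = (P f₀ - p) + t • P k := by
    rw [map_add, map_smul]; abel
  have hsq : ‖P f₀ - p‖^2 ≤ ‖(P f₀ - p) + t • P k‖^2 := by
    rw [← hexp]; exact pow_le_pow_left₀ (norm_nonneg _) hle 2
  rw [norm_add_sq_real, real_inner_smul_right, norm_smul] at hsq
  rw [Real.norm_eq_abs, mul_pow, sq_abs] at hsq
  linarith

end Aux

set_option maxHeartbeats 800000 in
theorem stmt_4
    {H : Type*} [NormedAddCommGroup H] [InnerProductSpace ℝ H] [CompleteSpace H]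
    (R S : H →L[ℝ] H)
    (hR : IsSelfAdjoint R) (hRi : R ∘L R = R)
    (hS : IsSelfAdjoint S) (hSi : S ∘L S = S)
    (hker : LinearMap.ker (R : H →ₗ[ℝ] H) ⊓ LinearMap.ker (S : H →ₗ[ℝ] H) = ⊥)
    (r s : H) (hr : r ∈ LinearMap.range (R : H →ₗ[ℝ] H)) (hs : s ∈ LinearMap.range (S : H →ₗ[ℝ] H))
    (τ : ℝ) (hτ : τ ∈ Set.Ioo (0 : ℝ) 1)
    (f₀ f₁ : H)
    (hf₀ : R f₀ = r ∧ IsMinOn (fun f : H => ‖S f - s‖) {f : H | R f = r} f₀)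
    (hf₁ : S f₁ = s ∧ IsMinOn (fun f : H => ‖R f - r‖) {f : H | S f = s} f₁) :
    IsMinOn (fun f : H => (1 - τ) * ‖R f - r‖ ^ 2 + τ * ‖S f - s‖ ^ 2) Set.univ
        ((1 - τ) • f₀ + τ • f₁) ∧
    ∀ g : H,
      IsMinOn (fun f : H => (1 - τ) * ‖R f - r‖ ^ 2 + τ * ‖S f - s‖ ^ 2) Set.univ g →
      g = (1 - τ) • f₀ + τ • f₁ := by
  obtain ⟨hτ0, hτ1⟩ := hτ
  obtain ⟨hRf₀, hmin₀⟩ := hf₀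
  obtain ⟨hSf₁, hmin₁⟩ := hf₁
  have hRsym : ∀ x y : H, ⟪R x, y⟫ = ⟪x, R y⟫ := fun x y =>
    (ContinuousLinearMap.isSelfAdjoint_iff_isSymmetric.mp hR) x y
  have hSsym : ∀ x y : H, ⟪S x, y⟫ = ⟪x, S y⟫ := fun x y =>
    (ContinuousLinearMap.isSelfAdjoint_iff_isSymmetric.mp hS) x y
  have hRid : ∀ x, R (R x) = R x := fun x => by
    have := DFunLike.congr_fun hRi x
    simpa using this
  have hSid : ∀ x, S (S x) = S x := fun x => by
    have := DFunLike.congr_fun hSi x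
    simpa using this
  have hRr : R r = r := by obtain ⟨x, hx⟩ := hr; rw [← hx]; exact hRid x
  have hSs : S s = s := by obtain ⟨x, hx⟩ := hs; rw [← hx]; exact hSid x
  set u := R f₁ - r with hu
  set v := S f₀ - s with hv
  have hRu : R u = u := by rw [hu, map_sub, hRid, hRr]
  have hSv : S v = v := by rw [hv, map_sub, hSid, hSs]
  -- variational conditions
  have hvker : ∀ k, R k = 0 → ⟪v, k⟫ = 0 := by
    intro k hk
    have h1 : ⟪S f₀ - s, S k⟫ = 0 := variational S R s r f₀ hmin₀ hRf₀ k hk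
    calc ⟪v, k⟫ = ⟪S v, k⟫ := by rw [hSv]
      _ = ⟪v, S k⟫ := hSsym v k
      _ = 0 := h1
  have huker : ∀ k, S k = 0 → ⟪u, k⟫ = 0 := by
    intro k hk
    have h1 : ⟪R f₁ - r, R k⟫ = 0 := variational R S r s f₁ hmin₁ hSf₁ k hk
    calc ⟪u, k⟫ = ⟪R u, k⟫ := by rw [hRu]
      _ = ⟪u, R k⟫ := hRsym u k
      _ = 0 := h1
  have hRv : R v = v := fix_of_ker_orth R hRsym hRid v hvker
  have hSu : S u = u := fix_of_ker_orth S hSsym hSid u huker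
  -- u + v = 0
  have huv : u + v = 0 := by
    have hw : u + v = (R - S) (f₁ - f₀) := by
      simp only [ContinuousLinearMap.sub_apply, map_sub, hRf₀, hSf₁, hu, hv]
      abel
    have hinner : ⟪u + v, u + v⟫ = 0 := by
      nth_rewrite 2 [hw]
      rw [ContinuousLinearMap.sub_apply, inner_sub_right, ← hRsym, ← hSsym,
        map_add, map_add, hRu, hRv, hSu, hSv]
      ring
    exact inner_self_eq_zero.mp hinner
  set fτ := (1 - τ) • f₀ + τ • f₁ with hfτ
  have hRτ : R fτ - r = τ • u := by
    rw [hfτ, map_add, map_smul, map_smul, hRf₀, hu]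
    rw [smul_sub]
    have : (1 - τ) • r = r - τ • r := by rw [sub_smul, one_smul]
    rw [this]; abel
  have hSτ : S fτ - s = (1 - τ) • v := by
    rw [hfτ, map_add, map_smul, map_smul, hSf₁, hv]
    rw [smul_sub]
    have : τ • s = s - (1 - τ) • s := by rw [sub_smul, one_smul]; abel
    rw [this]; abel
  -- key decomposition
  have key : ∀ f : H, (1 - τ) * ‖R f - r‖ ^ 2 + τ * ‖S f - s‖ ^ 2
      = ((1 - τ) * ‖R fτ - r‖ ^ 2 + τ * ‖S fτ - s‖ ^ 2)
        + ((1 - τ) * ‖R (f - fτ)‖ ^ 2 + τ * ‖S (f - fτ)‖ ^ 2) := by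
    intro f
    have h1 : R f - r = (R fτ - r) + R (f - fτ) := by rw [map_sub]; abel
    have h2 : S f - s = (S fτ - s) + S (f - fτ) := by rw [map_sub]; abel
    rw [h1, h2, norm_add_sq_real, norm_add_sq_real]
    have c1 : ⟪R fτ - r, R (f - fτ)⟫ = τ * ⟪u, f - fτ⟫ := by
      rw [hRτ, real_inner_smul_left, ← hRsym, hRu]
    have c2 : ⟪S fτ - s, S (f - fτ)⟫ = (1 - τ) * ⟪v, f - fτ⟫ := by
      rw [hSτ, real_inner_smul_left, ← hSsym, hSv]
    have c3 : ⟪u, f - fτ⟫ + ⟪v, f - fτ⟫ = 0 := by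
      rw [← inner_add_left, huv, inner_zero_left]
    rw [c1, c2]
    linear_combination (2*τ*(1-τ)) * c3
  have hunique : ∀ g : H,
      (1 - τ) * ‖R g - r‖ ^ 2 + τ * ‖S g - s‖ ^ 2
        ≤ (1 - τ) * ‖R fτ - r‖ ^ 2 + τ * ‖S fτ - s‖ ^ 2 → g = fτ := by
    intro g hg
    have hk := key g
    have ht1 : 0 < 1 - τ := by linarith
    have hx : (0:ℝ) ≤ ‖R (g - fτ)‖ ^ 2 := sq_nonneg _
    have hy : (0:ℝ) ≤ ‖S (g - fτ)‖ ^ 2 := sq_nonneg _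
    have hxnn : (0:ℝ) ≤ (1 - τ) * ‖R (g - fτ)‖ ^ 2 := mul_nonneg ht1.le hx
    have hynn : (0:ℝ) ≤ τ * ‖S (g - fτ)‖ ^ 2 := mul_nonneg hτ0.le hy
    have hsum : (1 - τ) * ‖R (g - fτ)‖ ^ 2 + τ * ‖S (g - fτ)‖ ^ 2 ≤ 0 := by linarith
    have hx0 : (1 - τ) * ‖R (g - fτ)‖ ^ 2 = 0 := le_antisymm (by linarith) hxnn
    have hy0 : τ * ‖S (g - fτ)‖ ^ 2 = 0 := le_antisymm (by linarith) hynn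
    have hR0 : ‖R (g - fτ)‖ ^ 2 = 0 := by
      rcases mul_eq_zero.mp hx0 with h | h
      · linarith
      · exact h
    have hS0 : ‖S (g - fτ)‖ ^ 2 = 0 := by
      rcases mul_eq_zero.mp hy0 with h | h
      · linarith
      · exact h
    have hR0' : R (g - fτ) = 0 := norm_eq_zero.mp (sq_eq_zero_iff.mp hR0)
    have hS0' : S (g - fτ) = 0 := norm_eq_zero.mp (sq_eq_zero_iff.mp hS0)
    have hmem : g - fτ ∈ LinearMap.ker (R : H →ₗ[ℝ] H) ⊓ LinearMap.ker (S : H →ₗ[ℝ] H) :=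
      Submodule.mem_inf.mpr ⟨LinearMap.mem_ker.mpr hR0', LinearMap.mem_ker.mpr hS0'⟩
    rw [hker] at hmem
    exact sub_eq_zero.mp ((Submodule.mem_bot ℝ).mp hmem)
  constructor
  · rw [isMinOn_iff]
    intro f _
    have := key f
    have ht1 : 0 < 1 - τ := by linarith
    nlinarith [sq_nonneg ‖R (f - fτ)‖, sq_nonneg ‖S (f - fτ)‖]
  · intro g hg
    exact hunique g (hg (Set.mem_univ fτ))
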